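/- With S as above and S′ = S ∪ {(0:0:1)}, the projective linear map g induced by the matrix with rows (0,-1,0),(1,0,0),(0,0,1) satisfies g(conj(S′)) = S′; hence the field of moduli of S′ is ℝ. -/

import Mathlib

open Projectivization
open scoped LinearAlgebra.Projectivization

noncomputable section

abbrev P2 := ℙ ℂ (Fin 3 → ℂ)

/-- Coordinatewise complex conjugation on ℙ²(ℂ). -/
def conjP (p : P2) : P2 :=
  Projectivization.mk ℂ (fun i => starRingEnd ℂ (p.rep i)) (by
    intro h
    apply p.rep_nonzero
    funext i
    have := congrFun h i
    simpa using this)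

/-- The four points F = {(1:0:1), (-1:0:1), (0:1:1), (0:-1:1)}. -/
def F : Set P2 :=
  {Projectivization.mk ℂ ![1, 0, 1] (fun h => by have := congrFun h 0; simp at this),
   Projectivization.mk ℂ ![-1, 0, 1] (fun h => by have := congrFun h 2; simp at this),
   Projectivization.mk ℂ ![0, 1, 1] (fun h => by have := congrFun h 1; simp at this),
   Projectivization.mk ℂ ![0, -1, 1] (fun h => by have := congrFun h 2; simp at this)}

/-- The set S = {(aᵢ:1:0), (1:-conj(aᵢ):0) : i} ∪ F. -/
def Spts (m : ℕ) (a : Fin m → ℂ) : Set P2 :=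
  (⋃ i : Fin m,
    {Projectivization.mk ℂ ![a i, 1, 0] (fun h => by have := congrFun h 1; simp at this),
     Projectivization.mk ℂ ![1, -(starRingEnd ℂ (a i)), 0]
       (fun h => by have := congrFun h 0; simp at this)}) ∪ F

/-- The projective linear map g induced by the matrix with rows (0,-1,0), (1,0,0), (0,0,1). -/
def gEquiv : (Fin 3 → ℂ) ≃ₗ[ℂ] (Fin 3 → ℂ) where
  toFun v := ![-(v 1), v 0, v 2]
  invFun v := ![v 1, -(v 0), v 2]
  map_add' x y := by funext i; fin_cases i <;> simp <;> ring
  map_smul' c x := by funext i; fin_cases i <;> simp <;> ring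
  left_inv v := by funext i; fin_cases i <;> simp <;> ring
  right_inv v := by funext i; fin_cases i <;> simp <;> ring

def gP : P2 → P2 := Projectivization.map gEquiv.toLinearMap gEquiv.injective

/-- S′ = S ∪ {(0:0:1)}. -/
def Spts' (m : ℕ) (a : Fin m → ℂ) : Set P2 :=
  Spts m a ∪
    {Projectivization.mk ℂ ![0, 0, 1] (fun h => by have := congrFun h 2; simp at this)}


lemma vne1 (x y z : ℂ) (h : y = 1) : (![x, y, z] : Fin 3 → ℂ) ≠ 0 := by
  intro hh; have := congrFun hh 1; simp [h] at this

lemma vne0 (x y z : ℂ) (h : x = 1) : (![x, y, z] : Fin 3 → ℂ) ≠ 0 := by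
  intro hh; have := congrFun hh 0; simp [h] at this

lemma vne2 (x y z : ℂ) (h : z = 1) : (![x, y, z] : Fin 3 → ℂ) ≠ 0 := by
  intro hh; have := congrFun hh 2; simp [h] at this

def ptA (x : ℂ) : P2 := Projectivization.mk ℂ ![x, 1, 0] (vne1 _ _ _ rfl)
def ptB (x : ℂ) : P2 :=
  Projectivization.mk ℂ ![1, -(starRingEnd ℂ x), 0] (vne0 _ _ _ rfl)
def p1 : P2 := Projectivization.mk ℂ ![1, 0, 1] (vne2 _ _ _ rfl)
def p2 : P2 := Projectivization.mk ℂ ![-1, 0, 1] (vne2 _ _ _ rfl)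
def p3 : P2 := Projectivization.mk ℂ ![0, 1, 1] (vne2 _ _ _ rfl)
def p4 : P2 := Projectivization.mk ℂ ![0, -1, 1] (vne2 _ _ _ rfl)
def pO : P2 := Projectivization.mk ℂ ![0, 0, 1] (vne2 _ _ _ rfl)

lemma conjP_mk (v : Fin 3 → ℂ) (hv : v ≠ 0) (hw : (fun i => starRingEnd ℂ (v i)) ≠ 0) :
    conjP (Projectivization.mk ℂ v hv)
      = Projectivization.mk ℂ (fun i => starRingEnd ℂ (v i)) hw := by
  obtain ⟨c, hc⟩ := Projectivization.exists_smul_eq_mk_rep ℂ v hv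
  unfold conjP
  rw [Projectivization.mk_eq_mk_iff]
  refine ⟨Units.map (starRingEnd ℂ).toMonoidHom c, ?_⟩
  funext i
  simp [← hc, Units.smul_def, Pi.smul_apply, smul_eq_mul, map_mul]

lemma phi_mk (v : Fin 3 → ℂ) (hv : v ≠ 0)
    (hw : (![-(starRingEnd ℂ (v 1)), starRingEnd ℂ (v 0), starRingEnd ℂ (v 2)] : Fin 3 → ℂ) ≠ 0) :
    gP (conjP (Projectivization.mk ℂ v hv))
      = Projectivization.mk ℂ
          ![-(starRingEnd ℂ (v 1)), starRingEnd ℂ (v 0), starRingEnd ℂ (v 2)] hw := by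
  have hcw : (fun i => starRingEnd ℂ (v i)) ≠ 0 := by
    intro h; apply hv; funext i
    have := congrFun h i; simpa using this
  rw [conjP_mk v hv hcw]
  unfold gP
  rw [Projectivization.map_mk]
  rw [Projectivization.mk_eq_mk_iff]
  exact ⟨1, by funext j; fin_cases j <;> simp [gEquiv]⟩

lemma hAB (x : ℂ) : gP (conjP (ptA x)) = ptB x := by
  unfold ptA ptB
  rw [phi_mk _ _ (by intro h; have := congrFun h 0; simp at this)]
  rw [Projectivization.mk_eq_mk_iff]
  refine ⟨-1, ?_⟩
  funext i
  fin_cases i <;> simp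

lemma hBA (x : ℂ) : gP (conjP (ptB x)) = ptA x := by
  unfold ptA ptB
  rw [phi_mk _ _ (by apply vne1; simp)]
  rw [Projectivization.mk_eq_mk_iff]
  refine ⟨1, ?_⟩
  funext i
  fin_cases i <;> simp

lemma h13 : gP (conjP p1) = p3 := by
  unfold p1 p3
  rw [phi_mk _ _ (by apply vne2; simp)]
  rw [Projectivization.mk_eq_mk_iff]
  exact ⟨1, by funext i; fin_cases i <;> simp⟩

lemma h24 : gP (conjP p2) = p4 := by
  unfold p2 p4
  rw [phi_mk _ _ (by apply vne2; simp)]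
  rw [Projectivization.mk_eq_mk_iff]
  exact ⟨1, by funext i; fin_cases i <;> simp⟩

lemma h32 : gP (conjP p3) = p2 := by
  unfold p3 p2
  rw [phi_mk _ _ (by apply vne2; simp)]
  rw [Projectivization.mk_eq_mk_iff]
  exact ⟨1, by funext i; fin_cases i <;> simp⟩

lemma h41 : gP (conjP p4) = p1 := by
  unfold p4 p1
  rw [phi_mk _ _ (by apply vne2; simp)]
  rw [Projectivization.mk_eq_mk_iff]
  exact ⟨1, by funext i; fin_cases i <;> simp⟩

lemma hOO : gP (conjP pO) = pO := by
  unfold pO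
  rw [phi_mk _ _ (by apply vne2; simp)]
  rw [Projectivization.mk_eq_mk_iff]
  exact ⟨1, by funext i; fin_cases i <;> simp⟩

lemma Spts'_eq (m : ℕ) (a : Fin m → ℂ) :
    Spts' m a = ((⋃ i : Fin m, {ptA (a i), ptB (a i)}) ∪ {p1, p2, p3, p4}) ∪ {pO} := rfl

/-- for a₁,…,a_m ∈ ℂ* with |aᵢ| ≠ 1, the projective linear map g with matrix
rows (0,-1,0),(1,0,0),(0,0,1) satisfies g(conj(S′)) = S′ for S′ = S ∪ {(0:0:1)},
S = {(aᵢ:1:0), (1:-conj(aᵢ):0)} ∪ {(±1:0:1),(0:±1:1)}; consequently S′ is projectively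
equivalent to its complex conjugate, i.e. the field of moduli of S′ is ℝ. -/
theorem field_of_moduli_S'_is_R (m : ℕ) (a : Fin m → ℂ)
    (ha0 : ∀ i, a i ≠ 0) (ha1 : ∀ i, ‖a i‖ ≠ 1) :
    gP '' (conjP '' Spts' m a) = Spts' m a ∧
    ∃ T : (Fin 3 → ℂ) ≃ₗ[ℂ] (Fin 3 → ℂ),
      Projectivization.map T.toLinearMap T.injective '' (conjP '' Spts' m a) = Spts' m a := by
  have key : (fun p => gP (conjP p)) '' Spts' m a = Spts' m a := by
    rw [Spts'_eq]
    rw [Set.image_union, Set.image_union, Set.image_iUnion, Set.image_singleton]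
    have hF : (fun p => gP (conjP p)) '' ({p1, p2, p3, p4} : Set P2) = {p1, p2, p3, p4} := by
      rw [Set.image_insert_eq, Set.image_insert_eq, Set.image_insert_eq, Set.image_singleton,
        h13, h24, h32, h41]
      ext x
      simp only [Set.mem_insert_iff, Set.mem_singleton_iff]
      tauto
    rw [hF, hOO]
    congr 2
    apply Set.iUnion_congr
    intro i
    rw [Set.image_pair, hAB, hBA, Set.pair_comm]
  constructor
  · rw [Set.image_image]; exact key
  · exact ⟨gEquiv, by rw [Set.image_image]; exact key⟩


end
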